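/- Let B ∈ ℂ^{n×n} be Hermitian positive definite, T ∈ ℂ^{n×n} invertible, D = (T^{-1})* B T^{-1}, and let D' = D ⊙ I be the diagonal matrix of diagonal entries of D (which are positive). If ‖D'^{-1/2} (T^{-1})* B T^{-1} D'^{-1/2} − I‖_F ≤ η for some 0 ≤ η < 1, then ‖B − T* D' T‖_F ≤ ‖B‖ · η/(1 − η), where ‖·‖ is the ℓ₂ operator norm and ‖·‖_F the Frobenius norm. -/

import Mathlib

open Matrix
open scoped ComplexOrder

noncomputable section


/-- The `ℓ₂` operator norm of a matrix. -/
def opNorm {m n : ℕ} (M : Matrix (Fin m) (Fin n) ℂ) : ℝ :=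
  ‖LinearMap.toContinuousLinearMap (Matrix.toEuclideanLin M)‖

/-- The condition number `κ(M) = ‖M‖·‖M⁻¹‖` in the `ℓ₂` operator norm. -/
def kappa {n : ℕ} (M : Matrix (Fin n) (Fin n) ℂ) : ℝ :=
  opNorm M * opNorm M⁻¹

/-- The Frobenius norm of a matrix. -/
def frobNorm {n : ℕ} (M : Matrix (Fin n) (Fin n) ℂ) : ℝ :=
  Real.sqrt (∑ i, ∑ j, ‖M i j‖ ^ 2)

/-- `D^{-1/2}`: the inverse of the diagonal matrix of square roots of diagonal entries. -/
def invSqrtDiag {n : ℕ} (D : Matrix (Fin n) (Fin n) ℂ) : Matrix (Fin n) (Fin n) ℂ :=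
  (Matrix.diagonal fun i => (Real.sqrt (D i i).re : ℂ))⁻¹

/-! ### Auxiliary lemmas -/

open scoped Matrix.Norms.L2Operator in
lemma aux_opNorm_eq_l2 {m n : ℕ} (M : Matrix (Fin m) (Fin n) ℂ) : opNorm M = ‖M‖ := rfl

open scoped Matrix.Norms.L2Operator in
lemma aux_opNorm_conjT {m n : ℕ} (M : Matrix (Fin m) (Fin n) ℂ) : opNorm Mᴴ = opNorm M := by
  rw [aux_opNorm_eq_l2, aux_opNorm_eq_l2, Matrix.l2_opNorm_conjTranspose]

/-- Sum of squared norms of a vector. -/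
def auxSumSq {m : ℕ} (v : Fin m → ℂ) : ℝ := ∑ i, ‖v i‖ ^ 2

lemma auxSumSq_nonneg {m : ℕ} (v : Fin m → ℂ) : 0 ≤ auxSumSq v :=
  Finset.sum_nonneg fun _ _ => sq_nonneg _

lemma aux_euclid_norm_eq {m : ℕ} (v : Fin m → ℂ) :
    ‖(WithLp.equiv 2 (Fin m → ℂ)).symm v‖ = Real.sqrt (auxSumSq v) := by
  rw [EuclideanSpace.norm_eq]
  congr 1

lemma aux_opNorm_nonneg {m n : ℕ} (M : Matrix (Fin m) (Fin n) ℂ) : 0 ≤ opNorm M :=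
  norm_nonneg _

lemma aux_frobNorm_nonneg {n : ℕ} (M : Matrix (Fin n) (Fin n) ℂ) : 0 ≤ frobNorm M :=
  Real.sqrt_nonneg _

open scoped Matrix.Norms.L2Operator in
lemma aux_mulVec_sqrt_le {m n : ℕ} (M : Matrix (Fin m) (Fin n) ℂ) (x : Fin n → ℂ) :
    Real.sqrt (auxSumSq (M *ᵥ x)) ≤ opNorm M * Real.sqrt (auxSumSq x) := by
  have h := Matrix.l2_opNorm_mulVec M ((WithLp.equiv 2 (Fin n → ℂ)).symm x)
  rw [aux_opNorm_eq_l2]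
  simpa [← aux_euclid_norm_eq] using h

lemma aux_opNorm_le_of_bound {m n : ℕ} (M : Matrix (Fin m) (Fin n) ℂ) {c : ℝ} (hc : 0 ≤ c)
    (h : ∀ x : Fin n → ℂ, Real.sqrt (auxSumSq (M *ᵥ x)) ≤ c * Real.sqrt (auxSumSq x)) :
    opNorm M ≤ c := by
  apply ContinuousLinearMap.opNorm_le_bound _ hc
  intro x
  have h2 := h ((WithLp.equiv 2 (Fin n → ℂ)) x)
  have hx : (WithLp.equiv 2 (Fin n → ℂ)).symm ((WithLp.equiv 2 (Fin n → ℂ)) x) = x := by simp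
  rw [← hx, aux_euclid_norm_eq]
  have heq : (LinearMap.toContinuousLinearMap (Matrix.toEuclideanLin M))
      ((WithLp.equiv 2 (Fin n → ℂ)).symm ((WithLp.equiv 2 (Fin n → ℂ)) x))
      = (WithLp.equiv 2 (Fin m → ℂ)).symm (M *ᵥ (WithLp.equiv 2 (Fin n → ℂ)) x) := by
    simp [Matrix.toEuclideanLin_apply]
  rw [heq, aux_euclid_norm_eq]
  exact h2

lemma aux_frobNorm_conjT {n : ℕ} (M : Matrix (Fin n) (Fin n) ℂ) : frobNorm Mᴴ = frobNorm M := by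
  unfold frobNorm
  rw [Finset.sum_comm]
  simp [Matrix.conjTranspose_apply]

lemma aux_mulVec_sqrt_le_frob {n : ℕ} (M : Matrix (Fin n) (Fin n) ℂ) (x : Fin n → ℂ) :
    Real.sqrt (auxSumSq (M *ᵥ x)) ≤ frobNorm M * Real.sqrt (auxSumSq x) := by
  have key : auxSumSq (M *ᵥ x) ≤ (∑ i, ∑ j, ‖M i j‖ ^ 2) * auxSumSq x := by
    unfold auxSumSq
    rw [Finset.sum_mul]
    apply Finset.sum_le_sum
    intro i _
    have h1 : ‖(M *ᵥ x) i‖ ≤ ∑ j, ‖M i j‖ * ‖x j‖ := by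
      simp only [Matrix.mulVec, dotProduct]
      refine (norm_sum_le _ _).trans ?_
      apply Finset.sum_le_sum
      intro j _
      simp [norm_mul]
    have h2 : (∑ j, ‖M i j‖ * ‖x j‖) ^ 2 ≤ (∑ j, ‖M i j‖ ^ 2) * ∑ j, ‖x j‖ ^ 2 :=
      Finset.sum_mul_sq_le_sq_mul_sq _ _ _
    calc ‖(M *ᵥ x) i‖ ^ 2 ≤ (∑ j, ‖M i j‖ * ‖x j‖) ^ 2 :=
          pow_le_pow_left₀ (norm_nonneg _) h1 2
      _ ≤ _ := h2
  calc Real.sqrt (auxSumSq (M *ᵥ x)) ≤ Real.sqrt ((∑ i, ∑ j, ‖M i j‖ ^ 2) * auxSumSq x) :=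
        Real.sqrt_le_sqrt key
    _ = frobNorm M * Real.sqrt (auxSumSq x) := by
        rw [Real.sqrt_mul (Finset.sum_nonneg fun _ _ => Finset.sum_nonneg fun _ _ => sq_nonneg _)]
        rfl

lemma aux_mulVec_sumSq_le {m n : ℕ} (M : Matrix (Fin m) (Fin n) ℂ) (x : Fin n → ℂ) :
    auxSumSq (M *ᵥ x) ≤ opNorm M ^ 2 * auxSumSq x := by
  have h := aux_mulVec_sqrt_le M x
  have h2 : Real.sqrt (auxSumSq (M *ᵥ x)) ^ 2 ≤ (opNorm M * Real.sqrt (auxSumSq x)) ^ 2 :=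
    pow_le_pow_left₀ (Real.sqrt_nonneg _) h 2
  rwa [Real.sq_sqrt (auxSumSq_nonneg _), mul_pow, Real.sq_sqrt (auxSumSq_nonneg _)] at h2

lemma aux_frobNorm_mul_le_left {n : ℕ} (X Y : Matrix (Fin n) (Fin n) ℂ) :
    frobNorm (X * Y) ≤ opNorm X * frobNorm Y := by
  have key : ∑ i, ∑ j, ‖(X * Y) i j‖ ^ 2 ≤ opNorm X ^ 2 * ∑ i, ∑ j, ‖Y i j‖ ^ 2 := by
    rw [Finset.sum_comm (f := fun i j => ‖(X * Y) i j‖ ^ 2),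
        Finset.sum_comm (f := fun i j => ‖Y i j‖ ^ 2), Finset.mul_sum]
    apply Finset.sum_le_sum
    intro j _
    have hcol : ∀ i, (X * Y) i j = (X *ᵥ fun k => Y k j) i := by
      intro i; simp [Matrix.mul_apply, Matrix.mulVec, dotProduct]
    calc ∑ i, ‖(X * Y) i j‖ ^ 2 = auxSumSq (X *ᵥ fun k => Y k j) := by
          unfold auxSumSq; exact Finset.sum_congr rfl fun i _ => by rw [hcol i]
      _ ≤ opNorm X ^ 2 * auxSumSq (fun k => Y k j) := aux_mulVec_sumSq_le _ _
      _ = opNorm X ^ 2 * ∑ i, ‖Y i j‖ ^ 2 := rfl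
  unfold frobNorm
  calc Real.sqrt (∑ i, ∑ j, ‖(X * Y) i j‖ ^ 2)
      ≤ Real.sqrt (opNorm X ^ 2 * ∑ i, ∑ j, ‖Y i j‖ ^ 2) := Real.sqrt_le_sqrt key
    _ = opNorm X * Real.sqrt (∑ i, ∑ j, ‖Y i j‖ ^ 2) := by
        rw [Real.sqrt_mul (sq_nonneg _), Real.sqrt_sq (aux_opNorm_nonneg _)]

lemma aux_frobNorm_mul_le_right {n : ℕ} (Y X : Matrix (Fin n) (Fin n) ℂ) :
    frobNorm (Y * X) ≤ frobNorm Y * opNorm X := by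
  have h : frobNorm (Y * X) = frobNorm (Xᴴ * Yᴴ) := by
    rw [← aux_frobNorm_conjT (Y * X), Matrix.conjTranspose_mul]
  rw [h, mul_comm]
  calc frobNorm (Xᴴ * Yᴴ) ≤ opNorm Xᴴ * frobNorm Yᴴ := aux_frobNorm_mul_le_left _ _
    _ = opNorm X * frobNorm Y := by rw [aux_opNorm_conjT, aux_frobNorm_conjT]

lemma aux_norm_dot_le {m : ℕ} (x v : Fin m → ℂ) :
    ‖star x ⬝ᵥ v‖ ≤ Real.sqrt (auxSumSq x) * Real.sqrt (auxSumSq v) := by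
  have h1 : ‖star x ⬝ᵥ v‖ ≤ ∑ i, ‖x i‖ * ‖v i‖ := by
    refine (norm_sum_le _ _).trans ?_
    apply Finset.sum_le_sum
    intro i _
    simp [norm_mul]
  refine h1.trans ?_
  rw [← Real.sqrt_mul (auxSumSq_nonneg _)]
  rw [Real.le_sqrt (Finset.sum_nonneg fun _ _ => mul_nonneg (norm_nonneg _) (norm_nonneg _))]
  · exact Finset.sum_mul_sq_le_sq_mul_sq _ _ _
  · exact mul_nonneg (auxSumSq_nonneg _) (auxSumSq_nonneg _)

lemma aux_re_dot_self {m : ℕ} (x : Fin m → ℂ) : (star x ⬝ᵥ x).re = auxSumSq x := by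
  rw [dotProduct, Complex.re_sum]
  refine Finset.sum_congr rfl fun i _ => ?_
  simp [Complex.star_def, Complex.conj_mul', ← Complex.ofReal_pow]

lemma aux_quad_re_le {m : ℕ} (M : Matrix (Fin m) (Fin m) ℂ) (x : Fin m → ℂ) :
    (star x ⬝ᵥ M *ᵥ x).re ≤ opNorm M * auxSumSq x := by
  have h1 : (star x ⬝ᵥ M *ᵥ x).re ≤ ‖star x ⬝ᵥ M *ᵥ x‖ := Complex.re_le_norm _
  refine h1.trans <| (aux_norm_dot_le x (M *ᵥ x)).trans ?_
  calc Real.sqrt (auxSumSq x) * Real.sqrt (auxSumSq (M *ᵥ x))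
      ≤ Real.sqrt (auxSumSq x) * (opNorm M * Real.sqrt (auxSumSq x)) :=
        mul_le_mul_of_nonneg_left (aux_mulVec_sqrt_le M x) (Real.sqrt_nonneg _)
    _ = opNorm M * auxSumSq x := by
        rw [mul_comm, mul_assoc, Real.mul_self_sqrt (auxSumSq_nonneg _)]

lemma aux_quad_re_coercive {m : ℕ} (E : Matrix (Fin m) (Fin m) ℂ) {η : ℝ} (hE : frobNorm E ≤ η)
    (x : Fin m → ℂ) : (1 - η) * auxSumSq x ≤ (star x ⬝ᵥ (1 + E) *ᵥ x).re := by
  have hsplit : (star x ⬝ᵥ (1 + E) *ᵥ x).re = auxSumSq x + (star x ⬝ᵥ E *ᵥ x).re := by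
    rw [Matrix.add_mulVec, Matrix.one_mulVec, dotProduct_add, Complex.add_re,
      aux_re_dot_self]
  have habs : ‖star x ⬝ᵥ E *ᵥ x‖ ≤ η * auxSumSq x := by
    refine (aux_norm_dot_le x (E *ᵥ x)).trans ?_
    calc Real.sqrt (auxSumSq x) * Real.sqrt (auxSumSq (E *ᵥ x))
        ≤ Real.sqrt (auxSumSq x) * (frobNorm E * Real.sqrt (auxSumSq x)) :=
          mul_le_mul_of_nonneg_left (aux_mulVec_sqrt_le_frob E x) (Real.sqrt_nonneg _)
      _ = frobNorm E * auxSumSq x := by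
          rw [mul_comm, mul_assoc, Real.mul_self_sqrt (auxSumSq_nonneg _)]
      _ ≤ η * auxSumSq x := mul_le_mul_of_nonneg_right hE (auxSumSq_nonneg _)
  have hre : -(η * auxSumSq x) ≤ (star x ⬝ᵥ E *ᵥ x).re := by
    have h := abs_le.mp ((Complex.abs_re_le_norm _).trans habs)
    linarith [h.1]
  rw [hsplit]; linarith

lemma aux_congr_dot {m : ℕ} (A M : Matrix (Fin m) (Fin m) ℂ) (y : Fin m → ℂ) :
    star (M *ᵥ y) ⬝ᵥ A *ᵥ (M *ᵥ y) = star y ⬝ᵥ (Mᴴ * A * M) *ᵥ y := by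
  rw [Matrix.star_mulVec, Matrix.mulVec_mulVec, ← Matrix.dotProduct_mulVec,
    Matrix.mulVec_mulVec, Matrix.mul_assoc]

/-! ### Main theorem -/

theorem frob_error_of_near_identity {n : ℕ} (B T : Matrix (Fin n) (Fin n) ℂ)
    (hB : B.PosDef) (hT : IsUnit T.det)
    (D D' : Matrix (Fin n) (Fin n) ℂ)
    (hD : D = (T⁻¹)ᴴ * B * T⁻¹)
    (hD' : D' = Matrix.diagonal fun i => D i i)
    (η : ℝ) (hη0 : 0 ≤ η) (hη1 : η < 1)
    (hclose : frobNorm (invSqrtDiag D' * ((T⁻¹)ᴴ * B * T⁻¹) * invSqrtDiag D' - 1) ≤ η) :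
    frobNorm (B - Tᴴ * D' * T) ≤ opNorm B * (η / (1 - η)) := by
  classical
  have h1mη : (0:ℝ) < 1 - η := by linarith
  -- D is positive definite
  have hDpos : D.PosDef := by
    refine Matrix.PosDef.of_dotProduct_mulVec_pos ?_ ?_
    · rw [hD]
      exact Matrix.isHermitian_conjTranspose_mul_mul _ hB.isHermitian
    · intro x hx
      have hx' : T⁻¹ *ᵥ x ≠ 0 := by
        intro h0
        apply hx
        have : T *ᵥ (T⁻¹ *ᵥ x) = x := by
          rw [Matrix.mulVec_mulVec, Matrix.mul_nonsing_inv T hT, Matrix.one_mulVec]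
        rw [← this, h0, Matrix.mulVec_zero]
      have := hB.dotProduct_mulVec_pos hx'
      rwa [aux_congr_dot B T⁻¹ x, ← hD] at this
  -- diagonal entries are positive reals
  have hdiag : ∀ i, 0 < D i i := by
    intro i
    have hsingle : (Pi.single i 1 : Fin n → ℂ) ≠ 0 := by
      intro h
      have := congrFun h i
      simp at this
    have := hDpos.dotProduct_mulVec_pos hsingle
    simpa [dotProduct, Matrix.mulVec_single, Pi.single_apply, apply_ite] using this
  have hdre : ∀ i, 0 < (D i i).re := fun i => (Complex.lt_def.mp (hdiag i)).1
  have hdim : ∀ i, (D i i).im = 0 := fun i => ((Complex.lt_def.mp (hdiag i)).2).symm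
  have hreal : ∀ i, D i i = (((D i i).re : ℝ) : ℂ) := by
    intro i
    apply Complex.ext <;> simp [hdim]
  have hs : ∀ i, (0:ℝ) < Real.sqrt (D i i).re := fun i => Real.sqrt_pos.mpr (hdre i)
  set Sinv : Matrix (Fin n) (Fin n) ℂ :=
    Matrix.diagonal fun i => ((Real.sqrt (D i i).re : ℝ) : ℂ) with hSinv_def
  set S : Matrix (Fin n) (Fin n) ℂ :=
    Matrix.diagonal fun i => (((Real.sqrt (D i i).re)⁻¹ : ℝ) : ℂ) with hS_def
  have hSSinv : S * Sinv = 1 := by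
    rw [hS_def, hSinv_def, Matrix.diagonal_mul_diagonal]
    rw [show (fun i => (((Real.sqrt (D i i).re)⁻¹ : ℝ) : ℂ) * ((Real.sqrt (D i i).re : ℝ) : ℂ))
        = fun _ => (1:ℂ) from funext fun i => by
      rw [← Complex.ofReal_mul, inv_mul_cancel₀ (hs i).ne', Complex.ofReal_one]]
    exact Matrix.diagonal_one
  have hSinvS : Sinv * S = 1 := by
    rw [hS_def, hSinv_def, Matrix.diagonal_mul_diagonal]
    rw [show (fun i => ((Real.sqrt (D i i).re : ℝ) : ℂ) * (((Real.sqrt (D i i).re)⁻¹ : ℝ) : ℂ))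
        = fun _ => (1:ℂ) from funext fun i => by
      rw [← Complex.ofReal_mul, mul_inv_cancel₀ (hs i).ne', Complex.ofReal_one]]
    exact Matrix.diagonal_one
  have hDD' : ∀ i, D' i i = D i i := fun i => by rw [hD', Matrix.diagonal_apply_eq]
  have hinvS : invSqrtDiag D' = S := by
    have hfun : (fun i => ((Real.sqrt ((D' i i).re) : ℝ) : ℂ))
        = fun i => ((Real.sqrt (D i i).re : ℝ) : ℂ) := funext fun i => by rw [hDD']
    rw [invSqrtDiag, hfun, ← hSinv_def]
    exact Matrix.inv_eq_left_inv hSSinv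
  have hSinvH : Sinvᴴ = Sinv := by
    have hstar : (star fun i => ((Real.sqrt (D i i).re : ℝ) : ℂ))
        = fun i => ((Real.sqrt (D i i).re : ℝ) : ℂ) := by
      funext i
      simp [Complex.conj_ofReal]
    rw [hSinv_def, Matrix.diagonal_conjTranspose, hstar]
  have hD'SS : D' = Sinv * Sinv := by
    rw [hD', hSinv_def, Matrix.diagonal_mul_diagonal]
    have hfun : (fun i => ((Real.sqrt (D i i).re : ℝ) : ℂ) * ((Real.sqrt (D i i).re : ℝ) : ℂ))
        = fun i => D i i := funext fun i => by
      rw [← Complex.ofReal_mul, Real.mul_self_sqrt (hdre i).le, ← hreal]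
    rw [hfun]
  -- B = Tᴴ D T
  have hTT : Tᴴ * (T⁻¹)ᴴ = 1 := by
    rw [← Matrix.conjTranspose_mul, Matrix.nonsing_inv_mul T hT, Matrix.conjTranspose_one]
  have hB_eq : Tᴴ * D * T = B := by
    rw [hD]
    calc Tᴴ * ((T⁻¹)ᴴ * B * T⁻¹) * T
        = (Tᴴ * (T⁻¹)ᴴ) * B * (T⁻¹ * T) := by
          simp only [Matrix.mul_assoc]
      _ = B := by rw [hTT, Matrix.nonsing_inv_mul T hT, Matrix.one_mul, Matrix.mul_one]
  set M : Matrix (Fin n) (Fin n) ℂ := Sinv * T with hM_def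
  set F : Matrix (Fin n) (Fin n) ℂ := S * D * S - 1 with hF_def
  have hF : frobNorm F ≤ η := by
    have : invSqrtDiag D' * ((T⁻¹)ᴴ * B * T⁻¹) * invSqrtDiag D' - 1 = F := by
      rw [hinvS, ← hD, hF_def]
    rwa [this] at hclose
  have h1F : (1 : Matrix (Fin n) (Fin n) ℂ) + F = S * D * S := by
    rw [hF_def]; noncomm_ring
  -- cancellation helpers
  have cancel1 : ∀ X : Matrix (Fin n) (Fin n) ℂ, Sinv * (S * X) = X := fun X => by
    rw [← Matrix.mul_assoc, hSinvS, Matrix.one_mul]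
  have cancel2 : ∀ X : Matrix (Fin n) (Fin n) ℂ, S * (Sinv * X) = X := fun X => by
    rw [← Matrix.mul_assoc, hSSinv, Matrix.one_mul]
  have hMH : Mᴴ = Tᴴ * Sinv := by
    rw [hM_def, Matrix.conjTranspose_mul, hSinvH]
  have key1 : Mᴴ * ((1 : Matrix (Fin n) (Fin n) ℂ) + F) * M = B := by
    rw [h1F, hMH, hM_def]
    calc (Tᴴ * Sinv) * (S * D * S) * (Sinv * T)
        = Tᴴ * (Sinv * (S * (D * (S * (Sinv * T))))) := by
          simp only [Matrix.mul_assoc]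
      _ = Tᴴ * (D * T) := by rw [cancel2 T, cancel1 (D * T)]
      _ = B := by rw [← Matrix.mul_assoc]; exact hB_eq
  have hMM : Mᴴ * M = Tᴴ * D' * T := by
    rw [hMH, hM_def, hD'SS]
    simp only [Matrix.mul_assoc]
  have key2 : B - Tᴴ * D' * T = Mᴴ * F * M := by
    have expand : Mᴴ * F * M = Mᴴ * (1 + F) * M - Mᴴ * M := by noncomm_ring
    rw [expand, key1, hMM]
  -- operator norm bound on M
  have hb : ∀ y, (1 - η) * auxSumSq (M *ᵥ y) ≤ opNorm B * auxSumSq y := by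
    intro y
    have h := aux_quad_re_coercive F hF (M *ᵥ y)
    rw [aux_congr_dot (1 + F) M y, key1] at h
    exact h.trans (aux_quad_re_le B y)
  have hc : (0:ℝ) ≤ opNorm B / (1 - η) := div_nonneg (aux_opNorm_nonneg _) h1mη.le
  have hopM : opNorm M ^ 2 ≤ opNorm B / (1 - η) := by
    have hle : opNorm M ≤ Real.sqrt (opNorm B / (1 - η)) := by
      apply aux_opNorm_le_of_bound _ (Real.sqrt_nonneg _)
      intro y
      have h2 : auxSumSq (M *ᵥ y) ≤ (opNorm B / (1 - η)) * auxSumSq y := by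
        rw [div_mul_eq_mul_div, le_div_iff₀ h1mη, mul_comm _ (1 - η)]
        exact hb y
      calc Real.sqrt (auxSumSq (M *ᵥ y))
          ≤ Real.sqrt ((opNorm B / (1 - η)) * auxSumSq y) := Real.sqrt_le_sqrt h2
        _ = Real.sqrt (opNorm B / (1 - η)) * Real.sqrt (auxSumSq y) := Real.sqrt_mul hc _
    calc opNorm M ^ 2 ≤ Real.sqrt (opNorm B / (1 - η)) ^ 2 :=
          pow_le_pow_left₀ (aux_opNorm_nonneg _) hle 2
      _ = opNorm B / (1 - η) := Real.sq_sqrt hc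
  -- final chain
  rw [key2]
  have step1 : frobNorm (Mᴴ * F * M) ≤ opNorm M * (frobNorm F * opNorm M) := by
    rw [Matrix.mul_assoc]
    calc frobNorm (Mᴴ * (F * M)) ≤ opNorm Mᴴ * frobNorm (F * M) :=
          aux_frobNorm_mul_le_left _ _
      _ ≤ opNorm Mᴴ * (frobNorm F * opNorm M) := by
          exact mul_le_mul_of_nonneg_left (aux_frobNorm_mul_le_right _ _)
            (aux_opNorm_nonneg _)
      _ = opNorm M * (frobNorm F * opNorm M) := by rw [aux_opNorm_conjT]
  refine step1.trans ?_
  have hfin : opNorm M * (frobNorm F * opNorm M) = opNorm M ^ 2 * frobNorm F := by ring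
  rw [hfin]
  calc opNorm M ^ 2 * frobNorm F ≤ (opNorm B / (1 - η)) * η := by
        apply mul_le_mul hopM hF (aux_frobNorm_nonneg _) hc
    _ = opNorm B * (η / (1 - η)) := by ring
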